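/- Let G be a group of upper triangular invertible d×d matrices over a field such that G is nilpotent. Then the nilpotency class of G is at most d(d-1)/2 + 1. -/

import Mathlib

open Matrix
open scoped commutatorElement

section Aux

variable {k : Type*} [Field k] {d : ℕ}

/-- All entries of `X` vanish at positions `(a,b)` with `b < a + m`
("depth at least `m`"); `Ndep 0` is upper triangularity. -/
def Ndep (m : ℕ) (X : Matrix (Fin d) (Fin d) k) : Prop :=
  ∀ a b : Fin d, (b : ℕ) < (a : ℕ) + m → X a b = 0

namespace Ndep

lemma mono {m n : ℕ} (h : n ≤ m) {X : Matrix (Fin d) (Fin d) k} (hX : Ndep m X) :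
    Ndep n X := fun a b hb => hX a b (by omega)

lemma zero (m : ℕ) : Ndep m (0 : Matrix (Fin d) (Fin d) k) := fun _ _ _ => rfl

lemma add {m : ℕ} {X Y : Matrix (Fin d) (Fin d) k} (hX : Ndep m X) (hY : Ndep m Y) :
    Ndep m (X + Y) := fun a b hb => by
  simp [Matrix.add_apply, hX a b hb, hY a b hb]

lemma sub {m : ℕ} {X Y : Matrix (Fin d) (Fin d) k} (hX : Ndep m X) (hY : Ndep m Y) :
    Ndep m (X - Y) := fun a b hb => by
  simp [Matrix.sub_apply, hX a b hb, hY a b hb]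

lemma neg {m : ℕ} {X : Matrix (Fin d) (Fin d) k} (hX : Ndep m X) : Ndep m (-X) :=
  fun a b hb => by simp [hX a b hb]

lemma mul {m n : ℕ} {X Y : Matrix (Fin d) (Fin d) k} (hX : Ndep m X) (hY : Ndep n Y) :
    Ndep (m + n) (X * Y) := by
  intro a b hb
  rw [Matrix.mul_apply]
  apply Finset.sum_eq_zero
  intro j _
  by_cases hj : (j : ℕ) < (a : ℕ) + m
  · rw [hX a j hj, zero_mul]
  · rw [hY j b (by omega), mul_zero]

lemma eq_zero {X : Matrix (Fin d) (Fin d) k} (hX : Ndep d X) : X = 0 := by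
  ext a b
  exact hX a b (lt_of_lt_of_le b.isLt (Nat.le_add_left d a))

lemma entry_mulR {m : ℕ} {X B : Matrix (Fin d) (Fin d) k} (hX : Ndep m X) (hB : Ndep 0 B)
    {a b : Fin d} (hab : (b : ℕ) = (a : ℕ) + m) : (X * B) a b = X a b * B b b := by
  rw [Matrix.mul_apply]
  apply Finset.sum_eq_single_of_mem b (Finset.mem_univ b)
  intro j _ hj
  have hj' : (j : ℕ) ≠ (b : ℕ) := fun h => hj (Fin.ext h)
  rcases lt_or_gt_of_ne hj' with h | h
  · rw [hX a j (by omega), zero_mul]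
  · rw [hB j b (by omega), mul_zero]

lemma entry_mulL {m : ℕ} {A X : Matrix (Fin d) (Fin d) k} (hA : Ndep 0 A) (hX : Ndep m X)
    {a b : Fin d} (hab : (b : ℕ) = (a : ℕ) + m) : (A * X) a b = A a a * X a b := by
  rw [Matrix.mul_apply]
  apply Finset.sum_eq_single_of_mem a (Finset.mem_univ a)
  intro j _ hj
  have hj' : (j : ℕ) ≠ (a : ℕ) := fun h => hj (Fin.ext h)
  rcases lt_or_gt_of_ne hj' with h | h
  · rw [hA a j (by omega), zero_mul]
  · rw [hX j b (by omega), mul_zero]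

end Ndep

variable (G : Subgroup (GL (Fin d) k))

/-- The underlying matrix of an element of the subgroup `G`. -/
def matG (g : G) : Matrix (Fin d) (Fin d) k := ((g : GL (Fin d) k) : Matrix (Fin d) (Fin d) k)

lemma matG_mul (g h : G) : matG G (g * h) = matG G g * matG G h := rfl

lemma matG_one : matG G (1 : G) = 1 := rfl

lemma matG_mul_inv (g : G) : matG G g * matG G g⁻¹ = 1 := by
  rw [← matG_mul, mul_inv_cancel, matG_one]

lemma diagG_inv (htr : ∀ g : G, Ndep 0 (matG G g)) (g : G) (b : Fin d) : matG G g b b * matG G g⁻¹ b b = 1 := by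
  have h := Ndep.entry_mulR (m := 0) (htr g) (htr g⁻¹) (a := b) (b := b) rfl
  rw [matG_mul_inv] at h
  rw [← h, Matrix.one_apply_eq]

/-- The key computation: commutation with any `g` preserves depth `m`, and on the
leading level the entry gets multiplied by `1 - g_aa (g⁻¹)_bb`. -/
lemma comm_key (htr : ∀ g : G, Ndep 0 (matG G g)) {m : ℕ} (hm : 1 ≤ m) (u g : G) (hy : Ndep m (matG G u - 1)) :
    Ndep m (matG G ⁅u, g⁆ - 1) ∧
      ∀ a b : Fin d, (b : ℕ) = (a : ℕ) + m →
        (matG G ⁅u, g⁆ - 1) a b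
          = (matG G u - 1) a b * (1 - matG G g a a * matG G g⁻¹ b b) := by
  set A := matG G u with hA
  set B := matG G g with hB
  set A' := matG G u⁻¹ with hA'
  set B' := matG G g⁻¹ with hB'
  have hAA' : A * A' = 1 := matG_mul_inv G u
  have hcomm : matG G ⁅u, g⁆ - 1 = ((A - 1) * B - B * (A - 1)) * (A' * B') := by
    have h1 : matG G ⁅u, g⁆ = A * B * A' * B' := by
      rw [commutatorElement_def, matG_mul, matG_mul, matG_mul]
    rw [h1]
    have h2 : ((A - 1) * B - B * (A - 1)) * (A' * B')
        = A * B * A' * B' - B * (A * A') * B' := by noncomm_ring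
    have hBB' : B * B' = 1 := matG_mul_inv G g
    rw [h2, hAA', mul_one, hBB']
  have hF : Ndep m ((A - 1) * B - B * (A - 1)) := by
    have h1 : Ndep m ((A - 1) * B) := hy.mul (htr g)
    have h2 : Ndep m (B * (A - 1)) := Ndep.mono (by omega) ((htr g).mul hy)
    exact h1.sub h2
  have hQ : Ndep 0 (A' * B') := (htr u⁻¹).mul (htr g⁻¹)
  constructor
  · rw [hcomm]
    exact hF.mul hQ
  · intro a b hab
    rw [hcomm, Ndep.entry_mulR hF hQ hab]
    have hFa : ((A - 1) * B - B * (A - 1)) a b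
        = (A - 1) a b * B b b - B a a * (A - 1) a b := by
      rw [Matrix.sub_apply, Ndep.entry_mulR hy (htr g) hab, Ndep.entry_mulL (htr g) hy hab]
    have hab0 : (b : ℕ) = (b : ℕ) + 0 := rfl
    have hQb : (A' * B') b b = A' b b * B' b b :=
      Ndep.entry_mulR (m := 0) (htr u⁻¹) (htr g⁻¹) hab0
    have hAbb : A b b = 1 := by
      have h1 : (A - 1) b b = 0 := hy b b (by omega)
      rw [Matrix.sub_apply, Matrix.one_apply_eq, sub_eq_zero] at h1
      exact h1
    have hA'bb : A' b b = 1 := by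
      have h1 := diagG_inv G htr u b
      rw [← hA, ← hA', hAbb, one_mul] at h1
      exact h1
    have hBb := diagG_inv G htr g b
    rw [← hB, ← hB'] at hBb
    rw [hFa, hQb, hA'bb, one_mul]
    linear_combination (A - 1) a b * hBb

/-- In a nilpotent group, commutation kills the leading level completely. -/
lemma comm_depth_succ (htr : ∀ g : G, Ndep 0 (matG G g)) (hnil : Group.IsNilpotent G) {m i : ℕ} (hm : 1 ≤ m) (u g : G)
    (hu : u ∈ Subgroup.lowerCentralSeries (⊤ : Subgroup G) i) (hy : Ndep m (matG G u - 1)) :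
    Ndep (m + 1) (matG G ⁅u, g⁆ - 1) := by
  obtain ⟨hN, hEntry⟩ := comm_key G htr hm u g hy
  intro a b hb
  rcases Nat.lt_or_ge (b : ℕ) ((a : ℕ) + m) with h | h
  · exact hN a b h
  · have hab : (b : ℕ) = (a : ℕ) + m := by omega
    rw [hEntry a b hab]
    by_contra h0
    set f : G → G := fun w => ⁅w, g⁆ with hf
    have key : ∀ r : ℕ, f^[r] u ∈ Subgroup.lowerCentralSeries (⊤ : Subgroup G) (i + r) ∧
        Ndep m (matG G (f^[r] u) - 1) ∧
        (matG G (f^[r] u) - 1) a b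
          = (matG G u - 1) a b * (1 - matG G g a a * matG G g⁻¹ b b) ^ r := by
      intro r
      induction r with
      | zero => exact ⟨by simpa using hu, hy, by simp⟩
      | succ r ih =>
        obtain ⟨h1, h2, h3⟩ := ih
        have hc := comm_key G htr hm (f^[r] u) g h2
        refine ⟨?_, ?_, ?_⟩
        · rw [Function.iterate_succ_apply']
          have : (i + (r + 1)) = (i + r) + 1 := by omega
          rw [this]
          show ⁅f^[r] u, g⁆ ∈ ⁅Subgroup.lowerCentralSeries (⊤ : Subgroup G) (i + r), ⊤⁆
          exact Subgroup.commutator_mem_commutator h1 (Subgroup.mem_top g)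
        · rw [Function.iterate_succ_apply']
          exact hc.1
        · rw [Function.iterate_succ_apply', hc.2 a b hab, h3, pow_succ]
          ring
    obtain ⟨n, hn⟩ := Subgroup.nilpotent_iff_lowerCentralSeries.mp hnil
    obtain ⟨k1, k2, k3⟩ := key n
    have hmem : f^[n] u ∈ (⊥ : Subgroup G) := by
      rw [← hn]
      exact Subgroup.lowerCentralSeries_antitone ⊤ (Nat.le_add_left n i) k1
    rw [Subgroup.mem_bot] at hmem
    rw [hmem, matG_one, sub_self, Matrix.zero_apply] at k3
    have hne1 : (matG G u - 1) a b ≠ 0 := left_ne_zero_of_mul h0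
    have hne2 : (1 - matG G g a a * matG G g⁻¹ b b) ≠ 0 := right_ne_zero_of_mul h0
    exact (mul_ne_zero hne1 (pow_ne_zero n hne2)) k3.symm

/-- The subgroup of elements `v` with `matG v - 1` of depth `≥ m`. -/
def depthSubgroup (htr : ∀ g : G, Ndep 0 (matG G g)) (m : ℕ) : Subgroup G where
  carrier := {v : G | Ndep m (matG G v - 1)}
  one_mem' := by
    show Ndep m (matG G (1 : G) - 1)
    rw [matG_one, sub_self]
    exact Ndep.zero m
  mul_mem' := by
    intro v w hv hw
    show Ndep m (matG G (v * w) - 1)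
    have hexp : matG G (v * w) - 1
        = (matG G v - 1) * (matG G w - 1) + ((matG G v - 1) + (matG G w - 1)) := by
      rw [matG_mul]; noncomm_ring
    rw [hexp]
    exact (Ndep.mono (by omega) ((Ndep.mul hv hw))).add (hv.add hw)
  inv_mem' := by
    intro v hv
    show Ndep m (matG G v⁻¹ - 1)
    have hexp : matG G v⁻¹ - 1 = -((matG G v - 1) * matG G v⁻¹) := by
      rw [sub_mul, one_mul, matG_mul_inv]
      abel
    rw [hexp]
    exact (Ndep.mul (hv) (htr v⁻¹)).neg

end Aux

theorem stmt18 {k : Type*} [Field k] (d : ℕ) (G : Subgroup (GL (Fin d) k))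
    (htri : ∀ g : GL (Fin d) k, g ∈ G →
      ((g : Matrix (Fin d) (Fin d) k)).BlockTriangular id)
    [hnil : Group.IsNilpotent G] :
    Group.nilpotencyClass G ≤ d * (d - 1) / 2 + 1 := by
  have htr : ∀ g : G, Ndep 0 (matG G g) := by
    intro g a b hb
    exact htri (g : GL (Fin d) k) g.2 (show (b : ℕ) < (a : ℕ) from by omega)
  rw [← lowerCentralSeries_eq_bot_iff_nilpotencyClass_le]
  rcases Nat.eq_zero_or_pos d with hd | hd
  · subst hd
    have hsub : Subsingleton G := ⟨fun a b => Subtype.ext (Units.ext (Subsingleton.elim _ _))⟩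
    exact Subsingleton.elim _ _
  · -- the chain: γ (n+1) ≤ depthSubgroup (n+1)
    have hchain : ∀ n : ℕ, Subgroup.lowerCentralSeries (⊤ : Subgroup G) (n + 1) ≤ depthSubgroup G htr (n + 1) := by
      intro n
      induction n with
      | zero =>
        show ⁅Subgroup.lowerCentralSeries (⊤ : Subgroup G) 0, ⊤⁆ ≤ depthSubgroup G htr 1
        rw [Subgroup.commutator_le]
        intro u _ g _
        show Ndep 1 (matG G ⁅u, g⁆ - 1)
        intro a b hb
        rcases Nat.lt_or_ge (b : ℕ) (a : ℕ) with h | h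
        · rw [Matrix.sub_apply, htr ⁅u, g⁆ a b (by omega),
            Matrix.one_apply_ne (fun hab => by rw [hab] at h; omega), sub_zero]
        · have hba : b = a := Fin.ext (by omega)
          subst hba
          rw [Matrix.sub_apply, Matrix.one_apply_eq]
          have hd1 : matG G ⁅u, g⁆
              = matG G u * matG G g * matG G u⁻¹ * matG G g⁻¹ := by
            rw [commutatorElement_def, matG_mul, matG_mul, matG_mul]
          have e1 : (matG G u * matG G g * matG G u⁻¹ * matG G g⁻¹) b b
              = (matG G u * matG G g * matG G u⁻¹) b b * matG G g⁻¹ b b :=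
            Ndep.entry_mulR (((htr u).mul (htr g)).mul (htr u⁻¹)) (htr g⁻¹) (by omega)
          have e2 : (matG G u * matG G g * matG G u⁻¹) b b
              = (matG G u * matG G g) b b * matG G u⁻¹ b b :=
            Ndep.entry_mulR ((htr u).mul (htr g)) (htr u⁻¹) (by omega)
          have e3 : (matG G u * matG G g) b b = matG G u b b * matG G g b b :=
            Ndep.entry_mulR (htr u) (htr g) (by omega)
          rw [hd1, e1, e2, e3]
          have h1 := diagG_inv G htr u b
          have h2 := diagG_inv G htr g b
          linear_combination (matG G g b b * matG G g⁻¹ b b) * h1 + h2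
      | succ n ih =>
        show ⁅Subgroup.lowerCentralSeries (⊤ : Subgroup G) (n + 1), ⊤⁆ ≤ depthSubgroup G htr (n + 2)
        rw [Subgroup.commutator_le]
        intro u hu g _
        show Ndep (n + 2) (matG G ⁅u, g⁆ - 1)
        exact comm_depth_succ G htr hnil (Nat.le_add_left 1 n) u g hu (ih hu)
    have hSbot : Subgroup.lowerCentralSeries (⊤ : Subgroup G) d = ⊥ := by
      rw [eq_bot_iff]
      intro v hv
      obtain ⟨n, rfl⟩ : ∃ n, d = n + 1 := ⟨d - 1, by omega⟩
      have h0 : matG G v - 1 = 0 := Ndep.eq_zero (hchain n hv)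
      have h1 : matG G v = matG G (1 : G) := by
        rw [matG_one]; rw [sub_eq_zero] at h0; exact h0
      have h2 : (v : GL (Fin (n + 1)) k) = ((1 : G) : GL (Fin (n + 1)) k) := Units.ext h1
      rw [Subgroup.mem_bot]
      exact Subtype.ext h2
    have hdle : d ≤ d * (d - 1) / 2 + 1 := by
      rcases d with _ | _ | n
      · omega
      · norm_num
      · have h1 : 2 * (n + 1) ≤ (n + 2) * (n + 1) :=
          Nat.mul_le_mul_right _ (by omega)
        have h2 : 2 * (n + 1) / 2 ≤ (n + 2) * (n + 1) / 2 := Nat.div_le_div_right h1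
        rw [Nat.mul_div_cancel_left _ (by norm_num)] at h2
        exact Nat.add_le_add_right h2 1
    rw [eq_bot_iff, ← hSbot]
    exact Subgroup.lowerCentralSeries_antitone ⊤ hdle
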